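/- Let S be a finite set, λ > 0, g ∈ ℝ, h : S → ℝ, i ∈ S, c_i ∈ ℝ, and let (q_j)_{j∈S} be real numbers with q_j ≥ 0 for all j ≠ i and Σ_{j∈S} q_j = 0, and suppose q_j > 0 for at least one j ≠ i. Define Q := ∫₀^∞ exp((λ(c_i − g) + q_i)·s) ds ∈ (0,∞]. If e^{λh(i)} = Q·Σ_{j∈S, j≠i} e^{λh(j)}·q_j holds in [0,∞], then Q < ∞ (equivalently λ(c_i − g) + q_i < 0) and λ·g·e^{λh(i)} = λ·c_i·e^{λh(i)} + Σ_{j∈S} e^{λh(j)}·q_j. (Identity (w-1) in the proof of Theorem 3.2(a): a minimizer of the first-passage form of the optimality equation yields equality in the risk-sensitive average cost optimality equation.) -/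

import Mathlib

open MeasureTheory Set
open scoped ENNReal

lemma aux_int {b : ℝ} (hb : 0 < b) :
    ∫ x in Ioi (0:ℝ), Real.exp (-b * x) = 1 / b := by
  have := integral_comp_mul_left_Ioi (fun x => Real.exp (-x)) 0 hb
  simp only [neg_mul, mul_zero, smul_eq_mul] at this ⊢
  rw [this, integral_exp_neg_Ioi_zero]
  simp [one_div]

lemma aux_lint {a : ℝ} (ha : a < 0) :
    (∫⁻ s in Ioi (0 : ℝ), ENNReal.ofReal (Real.exp (a * s)))
      = ENNReal.ofReal (1 / (-a)) := by
  have hb : 0 < -a := by linarith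
  rw [← aux_int hb, ← ofReal_integral_eq_lintegral_ofReal]
  · simp
  · have := exp_neg_integrableOn_Ioi 0 hb; simp at this ⊢; exact this
  · exact ae_of_all _ fun x => (Real.exp_pos _).le

theorem stmt5 {S : Type*} [Fintype S] [DecidableEq S]
    (lam : ℝ) (hlam : 0 < lam) (g : ℝ) (h : S → ℝ) (i : S) (ci : ℝ) (q : S → ℝ)
    (hq_nonneg : ∀ j, j ≠ i → 0 ≤ q j) (hq_sum : ∑ j, q j = 0)
    (hq_pos : ∃ j, j ≠ i ∧ 0 < q j)
    (heq : ENNReal.ofReal (Real.exp (lam * h i)) =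
      (∫⁻ s in Ioi (0 : ℝ), ENNReal.ofReal (Real.exp ((lam * (ci - g) + q i) * s))) *
        ∑ j ∈ Finset.univ.erase i,
          ENNReal.ofReal (Real.exp (lam * h j)) * ENNReal.ofReal (q j)) :
    (∫⁻ s in Ioi (0 : ℝ), ENNReal.ofReal (Real.exp ((lam * (ci - g) + q i) * s))) < ∞ ∧
    lam * (ci - g) + q i < 0 ∧
    lam * g * Real.exp (lam * h i) =
      lam * ci * Real.exp (lam * h i) + ∑ j, Real.exp (lam * h j) * q j := by
  set a := lam * (ci - g) + q i with ha_def
  set E : ℝ := ∑ j ∈ Finset.univ.erase i, Real.exp (lam * h j) * q j with hE_def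
  -- rewrite the ENNReal sum as ofReal E
  have hsum_eq : (∑ j ∈ Finset.univ.erase i,
      ENNReal.ofReal (Real.exp (lam * h j)) * ENNReal.ofReal (q j)) = ENNReal.ofReal E := by
    rw [hE_def, ENNReal.ofReal_sum_of_nonneg]
    · exact Finset.sum_congr rfl fun j hj => (ENNReal.ofReal_mul (Real.exp_pos _).le).symm
    · exact fun j hj =>
        mul_nonneg (Real.exp_pos _).le (hq_nonneg j (Finset.ne_of_mem_erase hj))
  have hE_pos : 0 < E := by
    obtain ⟨j, hj, hqj⟩ := hq_pos
    have hjm : j ∈ Finset.univ.erase i := Finset.mem_erase.2 ⟨hj, Finset.mem_univ j⟩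
    have : Real.exp (lam * h j) * q j ≤ E :=
      Finset.single_le_sum (f := fun k => Real.exp (lam * h k) * q k) (fun k hk =>
        mul_nonneg (Real.exp_pos _).le (hq_nonneg k (Finset.ne_of_mem_erase hk))) hjm
    nlinarith [Real.exp_pos (lam * h j)]
  rw [hsum_eq] at heq
  have ha : a < 0 := by
    by_contra hc
    push_neg at hc
    have hQ : (∫⁻ s in Ioi (0 : ℝ), ENNReal.ofReal (Real.exp (a * s))) = ⊤ := by
      have hle : volume (Ioi (0:ℝ)) ≤
          ∫⁻ s in Ioi (0 : ℝ), ENNReal.ofReal (Real.exp (a * s)) := by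
        have := setLIntegral_mono (μ := volume) (s := Ioi (0:ℝ))
          (f := fun _ => (1 : ℝ≥0∞)) (g := fun s => ENNReal.ofReal (Real.exp (a * s)))
          (ENNReal.measurable_ofReal.comp (Real.measurable_exp.comp ((measurable_const (a := a)).mul measurable_id))) (fun s hs => by
            rw [show (1:ℝ≥0∞) = ENNReal.ofReal 1 by simp]
            exact ENNReal.ofReal_le_ofReal (Real.one_le_exp (mul_nonneg hc (le_of_lt hs))))
        simpa using this
      exact top_le_iff.mp (le_trans (by simp) hle)
    rw [hQ, ENNReal.top_mul (by simpa using hE_pos)] at heq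
    exact (ENNReal.ofReal_ne_top heq)
  have hQ : (∫⁻ s in Ioi (0 : ℝ), ENNReal.ofReal (Real.exp (a * s)))
      = ENNReal.ofReal (1 / (-a)) := aux_lint ha
  refine ⟨by rw [hQ]; exact ENNReal.ofReal_lt_top, ha, ?_⟩
  have hna : (0:ℝ) < -a := by linarith
  rw [hQ, ← ENNReal.ofReal_mul (le_of_lt (div_pos one_pos hna))] at heq
  have hreal : Real.exp (lam * h i) = 1 / (-a) * E :=
    (ENNReal.ofReal_eq_ofReal_iff (Real.exp_pos _).le
      (mul_nonneg (le_of_lt (div_pos one_pos hna)) hE_pos.le)).mp heq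
  have key : (-a) * Real.exp (lam * h i) = E := by
    field_simp at hreal
    rw [hreal]; have := ha.ne; field_simp
  have hsplit : ∑ j, Real.exp (lam * h j) * q j = Real.exp (lam * h i) * q i + E := by
    rw [hE_def, ← Finset.add_sum_erase _ _ (Finset.mem_univ i)]
  rw [hsplit]
  have : -a = lam * g - lam * ci - q i := by rw [ha_def]; ring
  nlinarith [key]
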